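/- S(C(k,t), k, t) = C(k,t+1) for every positive integer k and 0 ≤ t ≤ k; i.e., the transpose of the AN PDA is an optimal (C(k,t), k, t, C(k,t+1)) PDA. -/

import Mathlib

/-- A `(K, F, Z, S)` placement delivery array: an `F × K` array over `[0,S) ∪ {*}`
(star encoded as `none`) such that each column contains exactly `Z` stars, every
integer in `[0,S)` appears, and any two equal integer entries lie in distinct rows
and distinct columns with stars at the two crossing positions. -/
def IsPDA (K F Z S : ℕ) (P : Fin F → Fin K → Option ℕ) : Prop :=
  (∀ j, (Finset.univ.filter fun i => P i j = none).card = Z) ∧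
  (∀ i j s, P i j = some s → s < S) ∧
  (∀ s, s < S → ∃ i j, P i j = some s) ∧
  (∀ i₁ j₁ i₂ j₂ s, P i₁ j₁ = some s → P i₂ j₂ = some s → (i₁ ≠ i₂ ∨ j₁ ≠ j₂) →
    i₁ ≠ i₂ ∧ j₁ ≠ j₂ ∧ P i₁ j₂ = none ∧ P i₂ j₁ = none)

/-- `minS K F Z` is the minimum `S` for which a `(K, F, Z, S)` PDA exists. -/
noncomputable def minS (K F Z : ℕ) : ℕ :=
  sInf {S | ∃ P : Fin F → Fin K → Option ℕ, IsPDA K F Z S P}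

open Finset

/-- Counting lower bound: the non-star cells number `K * (F - Z)`, and each
integer occurs at most `Z + 1` times, so `K * (F - Z) ≤ S * (Z + 1)`. -/
lemma pda_lower {K F Z S : ℕ} {P : Fin F → Fin K → Option ℕ} (h : IsPDA K F Z S P) :
    K * (F - Z) ≤ S * (Z + 1) := by
  classical
  obtain ⟨hcol, hlt, _, hcross⟩ := h
  set A : Finset (Fin F × Fin K) := Finset.univ.filter (fun c => (P c.1 c.2).isSome) with hA
  -- column counts
  have hcolsome : ∀ j : Fin K, (Finset.univ.filter fun i => (P i j).isSome).card = F - Z := by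
    intro j
    have h1 := Finset.card_filter_add_card_filter_not
      (s := (Finset.univ : Finset (Fin F))) (p := fun i => P i j = none)
    have h2 : (Finset.univ.filter fun i => ¬ P i j = none) =
        (Finset.univ.filter fun i => (P i j).isSome) := by
      apply Finset.filter_congr; intro i _; simp [Option.isSome_iff_ne_none]
    rw [hcol j, h2, Finset.card_univ, Fintype.card_fin] at h1
    omega
  -- total count of A
  have hAcard : A.card = K * (F - Z) := by
    have hmap : ∀ c ∈ A, c.2 ∈ (Finset.univ : Finset (Fin K)) := by intro c _; simp
    rw [Finset.card_eq_sum_card_fiberwise hmap]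
    rw [Finset.sum_congr rfl (fun j _ => ?_), Finset.sum_const, Finset.card_univ,
      Fintype.card_fin, smul_eq_mul]
    · rw [← hcolsome j]
      apply Finset.card_bij (fun c _ => c.1)
      · intro c hc
        simp only [hA, Finset.mem_filter, Finset.mem_univ, true_and] at hc ⊢
        rw [← hc.2]; exact hc.1
      · intro c hc c' hc' hcc
        simp only [hA, Finset.mem_filter] at hc hc'
        exact Prod.ext hcc (hc.2.trans hc'.2.symm)
      · intro i hi
        simp only [Finset.mem_filter, Finset.mem_univ, true_and] at hi
        exact ⟨(i, j), by simp [hA, hi], rfl⟩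
  -- fibers by value
  have hval : ∀ c ∈ A, (P c.1 c.2).getD 0 ∈ Finset.range S := by
    intro c hc
    simp only [hA, Finset.mem_filter, Finset.mem_univ, true_and] at hc
    obtain ⟨s, hs⟩ := Option.isSome_iff_exists.mp hc
    rw [hs]; simpa using hlt c.1 c.2 s hs
  have hfiber : ∀ s : ℕ, (A.filter fun c => (P c.1 c.2).getD 0 = s).card ≤ Z + 1 := by
    intro s
    set B : Finset (Fin F × Fin K) := Finset.univ.filter (fun c => P c.1 c.2 = some s) with hB
    have hsub : (A.filter fun c => (P c.1 c.2).getD 0 = s) ⊆ B := by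
      intro c hc
      simp only [hA, Finset.mem_filter, Finset.mem_univ, true_and] at hc
      obtain ⟨s', hs'⟩ := Option.isSome_iff_exists.mp hc.1
      simp only [hB, Finset.mem_filter, Finset.mem_univ, true_and]
      rw [hs']; rw [hs'] at hc; simpa using hc.2
    refine le_trans (Finset.card_le_card hsub) ?_
    rcases B.eq_empty_or_nonempty with hE | ⟨c₀, hc₀⟩
    · simp [hE]
    · have hc₀' : P c₀.1 c₀.2 = some s := by
        simpa [hB] using hc₀
      have herase : (B.erase c₀).card ≤ Z := by
        rw [← hcol c₀.2]
        apply Finset.card_le_card_of_injOn (fun c => c.1)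
        · intro c hc
          have hcB := Finset.mem_of_mem_erase hc
          have hne := Finset.ne_of_mem_erase hc
          have hcP : P c.1 c.2 = some s := by simpa [hB] using hcB
          have hd : c.1 ≠ c₀.1 ∨ c.2 ≠ c₀.2 := by
            by_contra hcon
            push_neg at hcon
            exact hne (Prod.ext hcon.1 hcon.2)
          have := hcross c.1 c.2 c₀.1 c₀.2 s hcP hc₀' hd
          simp only [Finset.mem_filter, Finset.mem_univ, true_and]
          simpa using this.2.2.1
        · intro c hc c' hc' hcc
          have hcP : P c.1 c.2 = some s := by
            simpa [hB] using Finset.mem_of_mem_erase hc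
          have hcP' : P c'.1 c'.2 = some s := by
            simpa [hB] using Finset.mem_of_mem_erase hc'
          by_contra hne
          have hd : c.1 ≠ c'.1 ∨ c.2 ≠ c'.2 := by
            by_contra hcon
            push_neg at hcon
            exact hne (Prod.ext hcon.1 hcon.2)
          exact (hcross c.1 c.2 c'.1 c'.2 s hcP hcP' hd).1 hcc
      have hce := Finset.card_erase_of_mem hc₀
      have hpos : 1 ≤ B.card := Finset.card_pos.mpr ⟨c₀, hc₀⟩
      omega
  calc K * (F - Z) = A.card := hAcard.symm
    _ = ∑ s ∈ Finset.range S, (A.filter fun c => (P c.1 c.2).getD 0 = s).card :=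
        Finset.card_eq_sum_card_fiberwise hval
    _ ≤ ∑ _s ∈ Finset.range S, (Z + 1) := Finset.sum_le_sum (fun s _ => hfiber s)
    _ = S * (Z + 1) := by simp [mul_comm]

/-- Equivalence between `t`-subsets of `Fin k` and `Fin (k.choose t)`. -/
noncomputable def setEquiv (k t : ℕ) : {s : Finset (Fin k) // s.card = t} ≃ Fin (k.choose t) :=
  Fintype.equivFinOfCardEq (by simp [Fintype.card_finset_len])

/-- The transpose of the AN PDA. -/
noncomputable def ANP (k t : ℕ) : Fin k → Fin (k.choose t) → Option ℕ := fun i j =>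
  if h : i ∈ ((setEquiv k t).symm j).val then none
  else some ((setEquiv k (t+1)) ⟨insert i ((setEquiv k t).symm j).val,
    by rw [Finset.card_insert_of_notMem h, ((setEquiv k t).symm j).2]⟩).val

lemma ANP_isPDA (k t : ℕ) : IsPDA (k.choose t) k t (k.choose (t+1)) (ANP k t) := by
  classical
  refine ⟨?_, ?_, ?_, ?_⟩
  · intro j
    have : (Finset.univ.filter fun i => ANP k t i j = none) =
        (Finset.univ.filter fun i => i ∈ ((setEquiv k t).symm j).val) := by
      apply Finset.filter_congr
      intro i _
      unfold ANP
      by_cases h : i ∈ ((setEquiv k t).symm j).val <;> simp [h]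
    rw [this, Finset.filter_univ_mem]
    exact ((setEquiv k t).symm j).2
  · intro i j s hs
    unfold ANP at hs
    by_cases h : i ∈ ((setEquiv k t).symm j).val
    · simp [h] at hs
    · simp only [h, dite_false, Option.some.injEq] at hs
      rw [← hs]
      exact ((setEquiv k (t+1)) _).2
  · intro s hs
    set U := (setEquiv k (t+1)).symm ⟨s, hs⟩ with hU
    have hUcard : U.val.card = t + 1 := U.2
    have hUne : U.val.Nonempty := Finset.card_pos.mp (by omega)
    obtain ⟨i, hi⟩ := hUne
    have hTcard : (U.val.erase i).card = t := by
      rw [Finset.card_erase_of_mem hi, hUcard]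
      omega
    set j := (setEquiv k t) ⟨U.val.erase i, hTcard⟩ with hj
    refine ⟨i, j, ?_⟩
    have hsymm : (setEquiv k t).symm j = ⟨U.val.erase i, hTcard⟩ := by
      rw [hj, Equiv.symm_apply_apply]
    have hv : ((setEquiv k t).symm j).val = U.val.erase i := congrArg Subtype.val hsymm
    have hni : i ∉ (U.val.erase i) := Finset.notMem_erase i _
    have h' : i ∉ ((setEquiv k t).symm j).val := by rw [hv]; exact hni
    unfold ANP
    rw [dif_neg h']
    congr 1
    have key : ∀ (T : {s : Finset (Fin k) // s.card = t+1}), T = U →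
        ((setEquiv k (t+1)) T).val = s := by
      intro T hT
      rw [hT, hU, Equiv.apply_symm_apply]
    apply key
    apply Subtype.ext
    show insert i ((setEquiv k t).symm j).val = U.val
    rw [hv]
    exact Finset.insert_erase hi
  · intro i₁ j₁ i₂ j₂ s h₁ h₂ hne
    unfold ANP at h₁ h₂
    by_cases ha : i₁ ∈ ((setEquiv k t).symm j₁).val
    · simp [ha] at h₁
    by_cases hb : i₂ ∈ ((setEquiv k t).symm j₂).val
    · simp [hb] at h₂
    simp only [ha, hb, dite_false, Option.some.injEq] at h₁ h₂
    set T₁ := ((setEquiv k t).symm j₁).val with hT₁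
    set T₂ := ((setEquiv k t).symm j₂).val with hT₂
    have hkey : insert i₁ T₁ = insert i₂ T₂ := by
      have := h₁.trans h₂.symm
      have := Fin.val_injective this
      have := (setEquiv k (t+1)).injective this
      exact congrArg Subtype.val this
    have hii : i₁ ≠ i₂ := by
      intro hcon
      subst hcon
      have hTT : T₁ = T₂ := by
        have := congrArg (fun S => Finset.erase S i₁) hkey
        simpa [Finset.erase_insert ha, Finset.erase_insert hb] using this
      have hjj : j₁ = j₂ := by
        have : ((setEquiv k t).symm j₁) = ((setEquiv k t).symm j₂) := Subtype.ext hTT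
        exact (setEquiv k t).symm.injective this
      rcases hne with h | h
      · exact h rfl
      · exact h hjj
    have hmem₁ : i₁ ∈ T₂ := by
      have : i₁ ∈ insert i₂ T₂ := hkey ▸ Finset.mem_insert_self i₁ T₁
      rcases Finset.mem_insert.mp this with h | h
      · exact absurd h hii
      · exact h
    have hmem₂ : i₂ ∈ T₁ := by
      have : i₂ ∈ insert i₁ T₁ := hkey ▸ Finset.mem_insert_self i₂ T₂
      rcases Finset.mem_insert.mp this with h | h
      · exact absurd h.symm hii
      · exact h
    have hjj : j₁ ≠ j₂ := by
      intro hcon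
      rw [hcon] at hT₁
      exact ha (hT₁ ▸ hmem₁)
    refine ⟨hii, hjj, ?_, ?_⟩
    · unfold ANP; rw [dif_pos hmem₁]
    · unfold ANP; rw [dif_pos hmem₂]

/-- S(C(k,t), k, t) = C(k,t+1): the transpose of the AN PDA is an
optimal (C(k,t), k, t, C(k,t+1)) PDA. -/
theorem stmt12 (k t : ℕ) (hk : 0 < k) (ht : t ≤ k) :
    minS (Nat.choose k t) k t = Nat.choose k (t + 1) := by
  have hmem : Nat.choose k (t+1) ∈
      {S | ∃ P : Fin k → Fin (Nat.choose k t) → Option ℕ, IsPDA (Nat.choose k t) k t S P} :=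
    ⟨ANP k t, ANP_isPDA k t⟩
  apply le_antisymm
  · exact Nat.sInf_le hmem
  · obtain ⟨P, hP⟩ := Nat.sInf_mem (⟨_, hmem⟩ :
      Set.Nonempty {S | ∃ P : Fin k → Fin (Nat.choose k t) → Option ℕ, IsPDA (Nat.choose k t) k t S P})
    have hlow := pda_lower hP
    have hid := Nat.choose_succ_right_eq k t
    have : Nat.choose k (t+1) * (t+1) ≤ minS (Nat.choose k t) k t * (t+1) := by
      rw [hid]; exact hlow
    exact Nat.le_of_mul_le_mul_right this (Nat.succ_pos t)
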